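/- Let n, f, f', e, r₁, r₂, r₃ be natural numbers with n = 3f' + 1, f ≤ f', r₁ ≤ f', r₂ ≤ f, and r₃ ≤ f. Then (2f+1)·r₁ + 2(f+1)·n + (f+1)·r₁ + 2·(2f'+1)·r₂ + 2·(2f'+1)·r₃ + (2f+1)·n + (f+1)·n + 2n + 6·e·f' ≤ (12f + 2e + 8)·n. In particular, for constant e the total number of effective messages exchanged between replicas in an epoch, including a possible view change, is O(fn + n). -/
import Mathlib

/-- Combining Equations (1)-(6): the total number of effective messages
exchanged between replicas in an epoch, including a possible view change,
is at most (12f + 2e + 8)n, i.e., O(fn + n) for constant e. -/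
theorem total_replica_messages (n f f' e r₁ r₂ r₃ : ℕ)
    (hn : n = 3 * f' + 1) (hf : f ≤ f')
    (hr₁ : r₁ ≤ f') (hr₂ : r₂ ≤ f) (hr₃ : r₃ ≤ f) :
    (2 * f + 1) * r₁ + 2 * (f + 1) * n + (f + 1) * r₁
      + 2 * (2 * f' + 1) * r₂ + 2 * (2 * f' + 1) * r₃ + (2 * f + 1) * n
      + (f + 1) * n + 2 * n + 6 * e * f'
      ≤ (12 * f + 2 * e + 8) * n := by
  subst hn
  nlinarith [Nat.mul_le_mul_left (2*f+1) hr₁, Nat.mul_le_mul_left (f+1) hr₁,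
    Nat.mul_le_mul_left (2*(2*f'+1)) hr₂, Nat.mul_le_mul_left (2*(2*f'+1)) hr₃,
    Nat.mul_le_mul_left f hf]
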